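/- Let n ≥ 2 be a natural number and let R be a commutative ℚ-algebra. Let c, d, q ∈ R satisfy q·q = 0 and n • (q·d^{n−1}) = −(n+1) • (c·d^n). Let ς : ℕ → ℕ satisfy ∑_{k=1}^{n} k·ς(k) = n. Then ∏_{k=1}^{n} ( (((n+1)/(n+2))^k · ((n : ℤ) + (−n)^k)) • (c^{2k−1}·(c·d + k·q)·d^{k−1}) )^{ς(k)} = ( −(n : ℚ) · ((n+1)/(n+2))^n · (∏_{k=1}^{n} ((n : ℤ) + (−n)^k)^{ς(k)} : ℤ) ) • (c^{2n}·d^n). -/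

import Mathlib

private lemma pow_nilp {R : Type*} [CommRing R] (u t : R) (ht : t * t = 0)
    (b : R) (m : ℕ) :
    (u + b * t) ^ m = u ^ m + (m : R) * b * t * u ^ (m - 1) := by
  induction m with
  | zero => simp
  | succ k ih =>
      rw [pow_succ, ih]
      rcases k with _ | k
      · simp
      · have hu : u * u ^ (k + 1 - 1) = u ^ (k + 1) := by
          rw [Nat.add_sub_cancel, ← pow_succ']
        push_cast
        ring_nf
        rw [show t ^ 2 = t * t from sq t, ht]
        ring_nf

private lemma prod_smul_aux {R : Type*} [CommRing R] [Algebra ℚ R] {ι : Type*}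
    (s : Finset ι) (b : ι → ℚ) (f : ι → R) :
    ∏ i ∈ s, b i • f i = (∏ i ∈ s, b i) • ∏ i ∈ s, f i := by
  induction s using Finset.cons_induction_on with
  | empty => simp
  | @cons a s hj ih =>
      rw [Finset.prod_cons, Finset.prod_cons, Finset.prod_cons, ih, smul_mul_smul_comm]

private lemma prod_nilp {R : Type*} [CommRing R] (u t : R) (ht : t * t = 0)
    (s : Finset ℕ) (b : ℕ → R) (m : ℕ → ℕ) :
    ∏ k ∈ s, (u + b k * t) ^ m k =
      u ^ (∑ k ∈ s, m k) +
        (∑ k ∈ s, (m k : R) * b k) * t * u ^ ((∑ k ∈ s, m k) - 1) := by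
  induction s using Finset.induction_on with
  | empty => simp
  | @insert a s ha ih =>
      rw [Finset.prod_insert ha, Finset.sum_insert ha, Finset.sum_insert ha, ih,
        pow_nilp u t ht]
      rcases Nat.eq_zero_or_pos (m a) with h0 | hma
      · simp [h0]
      rcases Nat.eq_zero_or_pos (∑ k ∈ s, m k) with hS | hS
      · have hall : ∀ k ∈ s, m k = 0 := fun k hk => by have := (Finset.sum_eq_zero_iff.mp hS) k hk; exact this
        have hC : (∑ k ∈ s, (m k : R) * b k) = 0 :=
          Finset.sum_eq_zero fun k hk => by rw [hall k hk]; simp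
        simp [hS, hC]
      · have h1 : u ^ (m a - 1) * u ^ (∑ k ∈ s, m k) = u ^ (m a + ∑ k ∈ s, m k - 1) := by
          rw [← pow_add]; congr 1; omega
        have h2 : u ^ (m a) * u ^ ((∑ k ∈ s, m k) - 1) = u ^ (m a + ∑ k ∈ s, m k - 1) := by
          rw [← pow_add]; congr 1; omega
        have h3 : u ^ (m a) * u ^ (∑ k ∈ s, m k) = u ^ (m a + ∑ k ∈ s, m k) := by
          rw [← pow_add]
        push_cast
        ring_nf
        rw [show t ^ 2 = t * t from sq t, ht, h1, h2,
          show m a + ∑ k ∈ s, m k - 1 = ∑ k ∈ s, m k + m a - 1 by omega]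
        ring

/-- evaluation of the product `∏ (tr Ċ^k)^{ς k}` in Step 2 of the
proof of Theorem 5.1, stated pointwise in a commutative ℚ-algebra. -/
theorem prod_trace_pow_eval (n : ℕ) (hn : 2 ≤ n)
    {R : Type*} [CommRing R] [Algebra ℚ R]
    (c d q : R) (hq : q * q = 0)
    (hrel : n • (q * d ^ (n - 1)) = -((n + 1) • (c * d ^ n)))
    (ς : ℕ → ℕ) (hς : ∑ k ∈ Finset.Icc 1 n, k * ς k = n) :
    ∏ k ∈ Finset.Icc 1 n,
        (((((n : ℚ) + 1) / ((n : ℚ) + 2)) ^ k *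
              (((n : ℤ) + (-(n : ℤ)) ^ k : ℤ) : ℚ)) •
            (c ^ (2 * k - 1) * (c * d + (k : R) * q) * d ^ (k - 1))) ^ ς k =
      (-(n : ℚ) * (((n : ℚ) + 1) / ((n : ℚ) + 2)) ^ n *
          ((∏ k ∈ Finset.Icc 1 n, ((n : ℤ) + (-(n : ℤ)) ^ k) ^ ς k : ℤ) : ℚ)) •
        (c ^ (2 * n) * d ^ n) := by
  have ht : (c * q) * (c * q) = 0 := by
    calc c * q * (c * q) = c * c * (q * q) := by ring
    _ = 0 := by rw [hq, mul_zero]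
  set u : R := c ^ 2 * d with hu
  set t : R := c * q with htdef
  -- the base factors
  have hfac : ∀ k ∈ Finset.Icc 1 n,
      c ^ (2 * k - 1) * (c * d + (k : R) * q) * d ^ (k - 1)
        = u ^ (k - 1) * (u + (k : R) * t) := by
    intro k hk
    have hk1 : 1 ≤ k := (Finset.mem_Icc.mp hk).1
    obtain ⟨j, rfl⟩ : ∃ j, k = j + 1 := ⟨k - 1, by omega⟩
    simp only [hu, htdef, show 2 * (j + 1) - 1 = 2 * j + 1 from by omega,
      Nat.add_sub_cancel]
    push_cast
    ring
  -- nat sum facts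
  have hM1 : 1 ≤ ∑ k ∈ Finset.Icc 1 n, ς k := by
    by_contra h
    have h0 : ∑ k ∈ Finset.Icc 1 n, ς k = 0 := by omega
    have hall := Finset.sum_eq_zero_iff.mp h0
    have : ∑ k ∈ Finset.Icc 1 n, k * ς k = 0 :=
      Finset.sum_eq_zero fun k hk => by rw [hall k hk, mul_zero]
    omega
  have hSM : (∑ k ∈ Finset.Icc 1 n, (k - 1) * ς k) + ∑ k ∈ Finset.Icc 1 n, ς k = n := by
    rw [← Finset.sum_add_distrib]
    conv_rhs => rw [← hς]
    refine Finset.sum_congr rfl fun k hk => ?_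
    have hk1 : 1 ≤ k := (Finset.mem_Icc.mp hk).1
    obtain ⟨j, rfl⟩ : ∃ j, k = j + 1 := ⟨k - 1, by omega⟩
    simp [Nat.add_sub_cancel, Nat.succ_mul]
  have hC : (∑ k ∈ Finset.Icc 1 n, (ς k : R) * (k : R)) = (n : R) := by
    calc ∑ k ∈ Finset.Icc 1 n, (ς k : R) * (k : R)
        = ∑ k ∈ Finset.Icc 1 n, ((k * ς k : ℕ) : R) :=
          Finset.sum_congr rfl fun k _ => by push_cast; ring
      _ = ((∑ k ∈ Finset.Icc 1 n, k * ς k : ℕ) : R) := (Nat.cast_sum _ _).symm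
      _ = (n : R) := by rw [hς]
  -- base product
  have hbase : ∏ k ∈ Finset.Icc 1 n,
      (c ^ (2 * k - 1) * (c * d + (k : R) * q) * d ^ (k - 1)) ^ ς k
        = -(n : R) * (c ^ (2 * n) * d ^ n) := by
    rw [Finset.prod_congr rfl fun k hk => by rw [hfac k hk]]
    simp only [mul_pow, ← pow_mul]
    rw [Finset.prod_mul_distrib, Finset.prod_pow_eq_pow_sum,
      prod_nilp u t ht _ (fun k => (k : R)) ς, hC]
    have e1 : u ^ (∑ k ∈ Finset.Icc 1 n, (k - 1) * ς k) * u ^ (∑ k ∈ Finset.Icc 1 n, ς k)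
        = u ^ n := by rw [← pow_add, hSM]
    have e2 : u ^ (∑ k ∈ Finset.Icc 1 n, (k - 1) * ς k)
        * u ^ ((∑ k ∈ Finset.Icc 1 n, ς k) - 1) = u ^ (n - 1) := by
      rw [← pow_add]; congr 1; omega
    have expand : u ^ (∑ k ∈ Finset.Icc 1 n, (k - 1) * ς k) *
        (u ^ (∑ k ∈ Finset.Icc 1 n, ς k)
          + (n : R) * t * u ^ ((∑ k ∈ Finset.Icc 1 n, ς k) - 1))
        = u ^ (∑ k ∈ Finset.Icc 1 n, (k - 1) * ς k) * u ^ (∑ k ∈ Finset.Icc 1 n, ς k)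
          + (n : R) * t * (u ^ (∑ k ∈ Finset.Icc 1 n, (k - 1) * ς k)
            * u ^ ((∑ k ∈ Finset.Icc 1 n, ς k) - 1)) := by ring
    rw [expand, e1, e2]
    have hun : u ^ n = c ^ (2 * n) * d ^ n := by
      rw [hu, mul_pow, ← pow_mul]
    have hrel' : (n : R) * (q * d ^ (n - 1)) = -(((n : R) + 1) * (c * d ^ n)) := by
      rw [nsmul_eq_mul, nsmul_eq_mul] at hrel
      push_cast at hrel
      exact hrel
    have hun1 : (n : R) * t * u ^ (n - 1) = -((n : R) + 1) * (c ^ (2 * n) * d ^ n) := by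
      calc (n : R) * t * u ^ (n - 1)
          = c ^ (2 * (n - 1) + 1) * ((n : R) * (q * d ^ (n - 1))) := by
            rw [htdef, hu, mul_pow, ← pow_mul]; ring
        _ = c ^ (2 * (n - 1) + 1) * (-(((n : R) + 1) * (c * d ^ n))) := by rw [hrel']
        _ = -((n : R) + 1) * (c ^ (2 * (n - 1) + 1 + 1) * d ^ n) := by
            rw [pow_succ]; ring
        _ = -((n : R) + 1) * (c ^ (2 * n) * d ^ n) := by
            rw [show 2 * (n - 1) + 1 + 1 = 2 * n from by omega]
    rw [hun, hun1]
    ring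
  -- scalar product
  have hscal : ∏ k ∈ Finset.Icc 1 n,
      ((((n : ℚ) + 1) / ((n : ℚ) + 2)) ^ k * (((n : ℤ) + (-(n : ℤ)) ^ k : ℤ) : ℚ)) ^ ς k
        = (((n : ℚ) + 1) / ((n : ℚ) + 2)) ^ n *
          ((∏ k ∈ Finset.Icc 1 n, ((n : ℤ) + (-(n : ℤ)) ^ k) ^ ς k : ℤ) : ℚ) := by
    simp only [mul_pow, ← pow_mul]
    rw [Finset.prod_mul_distrib, Finset.prod_pow_eq_pow_sum, hς]
    push_cast
    ring
  simp only [smul_pow]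
  rw [prod_smul_aux, hbase, hscal]
  have hneg : -(n : R) * (c ^ (2 * n) * d ^ n) = (-(n : ℚ)) • (c ^ (2 * n) * d ^ n) := by
    rw [Algebra.smul_def, map_neg, map_natCast]
  rw [hneg, smul_smul]
  congr 1
  ring
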